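/- Let (X, dist) be a metric space, let m ≥ 1 and k ≥ 1 be integers, let ε ∈ (0,1), and let n ≥ 1. Let p, q : Fin n → X be two families of n points such that Σ_{t<n} dist(p t, q t)^m ≤ (ε/(2m))^m · opt, where opt = ⨅ over all c' : Fin k → X of cost_m(p, c'). Then for every c : Fin k → X and every nonempty set 𝐊 of size vectors for n points and k clusters, |cost_{m,𝐊}(p, c) − cost_{m,𝐊}(q, c)| ≤ ε · cost_{m,𝐊}(p, c); i.e., every movement-based (k, ε)-coreset is a (k, ε)-size coreset. -/

import Mathlib

/-- The `k`-clustering cost of points `p` with centers `c`. -/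
noncomputable def clusterCost {X : Type*} [MetricSpace X] {n k : ℕ} (m : ℕ)
    (p : Fin n → X) (c : Fin k → X) : ℝ :=
  ∑ t, (⨅ i, dist (p t) (c i)) ^ m

/-- An assignment `α` satisfies the size vector `K` if each cluster `i`
gets exactly `K i` points. -/
def satisfiesSize {n k : ℕ} (α : Fin n → Fin k) (K : Fin k → ℕ) : Prop :=
  ∀ i, (Finset.univ.filter fun t => α t = i).card = K i

/-- The `K`-constrained clustering cost: minimum over assignments satisfying `K`. -/
noncomputable def sizeCost {X : Type*} [MetricSpace X] {n k : ℕ} (m : ℕ)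
    (p : Fin n → X) (c : Fin k → X) (K : Fin k → ℕ) : ℝ :=
  sInf {x | ∃ α : Fin n → Fin k, satisfiesSize α K ∧
    x = ∑ t, dist (p t) (c (α t)) ^ m}

/-- The cost under a size constraint, i.e. a set `Ks` of size vectors. -/
noncomputable def sizeConstraintCost {X : Type*} [MetricSpace X] {n k : ℕ} (m : ℕ)
    (p : Fin n → X) (c : Fin k → X) (Ks : Set (Fin k → ℕ)) : ℝ :=
  sInf {x | ∃ K ∈ Ks, x = sizeCost m p c K}

/-- The fiber of a sigma type over `i` is equivalent to `Fin (K i)`. -/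
def fiberEquivAux {k : ℕ} (K : Fin k → ℕ) (i : Fin k) :
    {s : Σ j, Fin (K j) // s.1 = i} ≃ Fin (K i) where
  toFun := fun ⟨⟨j, x⟩, hj⟩ => hj ▸ x
  invFun := fun x => ⟨⟨i, x⟩, rfl⟩
  left_inv := fun ⟨⟨j, x⟩, hj⟩ => by subst hj; rfl
  right_inv := fun x => rfl

/-- If the sizes sum to `n`, there is an assignment realizing them. -/
lemma exists_satisfiesSize {n k : ℕ} (K : Fin k → ℕ) (h : ∑ i, K i = n) :
    ∃ α : Fin n → Fin k, satisfiesSize α K := by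
  have hcard : Fintype.card (Σ i : Fin k, Fin (K i)) = Fintype.card (Fin n) := by
    simp [Fintype.card_sigma, h]
  let e := Fintype.equivOfCardEq hcard
  refine ⟨fun t => (e.symm t).1, fun i => ?_⟩
  rw [← Fintype.card_subtype]
  rw [Fintype.card_congr ((Equiv.subtypeEquiv e.symm (fun t => Iff.rfl)).trans
    (fiberEquivAux K i))]
  simp

/-- Minkowski's inequality specialized to natural powers of nonnegative functions. -/
lemma minkowskiAux {n m : ℕ} (hm : 1 ≤ m) (f g : Fin n → ℝ) (hf : ∀ t, 0 ≤ f t)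
    (hg : ∀ t, 0 ≤ g t) :
    (∑ t, (f t + g t) ^ m) ^ ((m:ℝ)⁻¹) ≤
      (∑ t, f t ^ m) ^ ((m:ℝ)⁻¹) + (∑ t, g t ^ m) ^ ((m:ℝ)⁻¹) := by
  have h := Real.Lp_add_le (s := Finset.univ) f g (p := (m:ℝ)) (by exact_mod_cast hm)
  have h1 : ∀ t : Fin n, |f t + g t| ^ (m:ℝ) = (f t + g t) ^ m := fun t => by
    rw [abs_of_nonneg (add_nonneg (hf t) (hg t)), Real.rpow_natCast]
  have h2 : ∀ t : Fin n, |f t| ^ (m:ℝ) = f t ^ m := fun t => by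
    rw [abs_of_nonneg (hf t), Real.rpow_natCast]
  have h3 : ∀ t : Fin n, |g t| ^ (m:ℝ) = g t ^ m := fun t => by
    rw [abs_of_nonneg (hg t), Real.rpow_natCast]
  simp only [h1, h2, h3, one_div] at h
  exact h

/-- The analytic core: if the `m`-th power movement is small relative to
`∑ a^m`, then `∑ u^m` is within a `(1 ± ε)` factor of `∑ a^m`. -/
lemma keyAux {n m : ℕ} (hm : 1 ≤ m) {ε : ℝ} (hε0 : 0 < ε) (hε1 : ε ≤ 1)
    (a b u : Fin n → ℝ) (ha : ∀ t, 0 ≤ a t) (hb : ∀ t, 0 ≤ b t) (hu : ∀ t, 0 ≤ u t)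
    (hub : ∀ t, u t ≤ a t + b t) (hau : ∀ t, a t ≤ u t + b t)
    (hB : ∑ t, b t ^ m ≤ (ε / (2 * m)) ^ m * ∑ t, a t ^ m) :
    (1 - ε) * ∑ t, a t ^ m ≤ ∑ t, u t ^ m ∧ ∑ t, u t ^ m ≤ (1 + ε) * ∑ t, a t ^ m := by
  have hm0 : (m : ℝ) ≠ 0 := Nat.cast_ne_zero.2 (by omega)
  have hm1 : (1 : ℝ) ≤ (m : ℝ) := by exact_mod_cast hm
  set δ : ℝ := ε / (2 * m) with hδdef
  have hδ0 : 0 < δ := div_pos hε0 (by positivity)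
  have hmδ : (m : ℝ) * δ = ε / 2 := by rw [hδdef, mul_div_assoc', div_eq_iff (by positivity)]; ring
  have hδhalf : δ ≤ 1 / 2 := by
    rw [hδdef, div_le_div_iff₀ (by positivity) (by norm_num)]
    nlinarith
  set A : ℝ := ∑ t, a t ^ m with hA
  set B : ℝ := ∑ t, b t ^ m with hBdef
  set U : ℝ := ∑ t, u t ^ m with hU
  have hA0 : 0 ≤ A := Finset.sum_nonneg fun t _ => pow_nonneg (ha t) m
  have hB0 : 0 ≤ B := Finset.sum_nonneg fun t _ => pow_nonneg (hb t) m
  have hU0 : 0 ≤ U := Finset.sum_nonneg fun t _ => pow_nonneg (hu t) m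
  set rA : ℝ := A ^ ((m:ℝ)⁻¹) with hrA
  set rB : ℝ := B ^ ((m:ℝ)⁻¹) with hrB
  set rU : ℝ := U ^ ((m:ℝ)⁻¹) with hrU
  have hrA0 : 0 ≤ rA := Real.rpow_nonneg hA0 _
  have hrU0 : 0 ≤ rU := Real.rpow_nonneg hU0 _
  have hrec : ∀ x : ℝ, 0 ≤ x → (x ^ ((m:ℝ)⁻¹)) ^ m = x := fun x hx => by
    rw [← Real.rpow_natCast (x ^ ((m:ℝ)⁻¹)) m, ← Real.rpow_mul hx, inv_mul_cancel₀ hm0,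
      Real.rpow_one]
  have hrB_le : rB ≤ δ * rA := by
    have h1 : B ≤ (δ * rA) ^ m := by
      rw [mul_pow, hrec A hA0]
      exact hB
    have h2 : rB ≤ ((δ * rA) ^ m) ^ ((m:ℝ)⁻¹) :=
      Real.rpow_le_rpow hB0 h1 (by positivity)
    rwa [← Real.rpow_natCast (δ * rA) m, ← Real.rpow_mul (by positivity),
      mul_inv_cancel₀ hm0, Real.rpow_one] at h2
  have hUpper : U ≤ (1 + δ) ^ m * A := by
    have h1 : U ≤ ∑ t, (a t + b t) ^ m :=
      Finset.sum_le_sum fun t _ => pow_le_pow_left₀ (hu t) (hub t) m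
    have h2 : (∑ t, (a t + b t) ^ m) ^ ((m:ℝ)⁻¹) ≤ rA + rB :=
      minkowskiAux hm a b ha hb
    have h3 : U ^ ((m:ℝ)⁻¹) ≤ (1 + δ) * rA := by
      calc U ^ ((m:ℝ)⁻¹) ≤ (∑ t, (a t + b t) ^ m) ^ ((m:ℝ)⁻¹) :=
            Real.rpow_le_rpow hU0 h1 (by positivity)
        _ ≤ rA + rB := h2
        _ ≤ rA + δ * rA := by linarith
        _ = (1 + δ) * rA := by ring
    have h4 : (U ^ ((m:ℝ)⁻¹)) ^ m ≤ ((1 + δ) * rA) ^ m :=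
      pow_le_pow_left₀ hrU0 h3 m
    rwa [hrec U hU0, mul_pow, hrec A hA0] at h4
  have hexp : (1 + δ) ^ m ≤ 1 + ε := by
    have h1 : (1 + δ) ^ m ≤ Real.exp δ ^ m :=
      pow_le_pow_left₀ (by positivity) (by linarith [Real.add_one_le_exp δ]) m
    have h2 : Real.exp δ ^ m = Real.exp (ε / 2) := by
      rw [← Real.exp_nat_mul, hmδ]
    have h3 : 1 - ε / 2 ≤ Real.exp (-(ε / 2)) := by linarith [Real.add_one_le_exp (-(ε/2))]
    have h4 : Real.exp (-(ε/2)) * Real.exp (ε/2) = 1 := by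
      rw [← Real.exp_add]; norm_num
    have h5 : 0 < Real.exp (ε / 2) := Real.exp_pos _
    nlinarith
  have hLower : (1 - δ) ^ m * A ≤ U := by
    have h1 : A ≤ ∑ t, (u t + b t) ^ m :=
      Finset.sum_le_sum fun t _ => pow_le_pow_left₀ (ha t) (hau t) m
    have h2 : (∑ t, (u t + b t) ^ m) ^ ((m:ℝ)⁻¹) ≤ rU + rB :=
      minkowskiAux hm u b hu hb
    have h3 : (1 - δ) * rA ≤ rU := by
      have : rA ≤ rU + δ * rA := by
        calc rA ≤ (∑ t, (u t + b t) ^ m) ^ ((m:ℝ)⁻¹) :=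
              Real.rpow_le_rpow hA0 h1 (by positivity)
          _ ≤ rU + rB := h2
          _ ≤ rU + δ * rA := by linarith
      linarith [this]
    have h4 : ((1 - δ) * rA) ^ m ≤ (rU) ^ m :=
      pow_le_pow_left₀ (by nlinarith) h3 m
    rwa [mul_pow, hrec A hA0, hrec U hU0] at h4
  have hbern : 1 - ε / 2 ≤ (1 - δ) ^ m := by
    have := one_add_mul_le_pow (a := -δ) (by linarith) m
    rw [mul_neg] at this
    calc 1 - ε / 2 = 1 + -((m:ℝ) * δ) := by rw [hmδ]; ring
      _ ≤ (1 + -δ) ^ m := this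
      _ = (1 - δ) ^ m := by ring_nf
  constructor
  · calc (1 - ε) * A ≤ (1 - ε / 2) * A := by nlinarith
      _ ≤ (1 - δ) ^ m * A := mul_le_mul_of_nonneg_right hbern hA0
      _ ≤ U := hLower
  · calc U ≤ (1 + δ) ^ m * A := hUpper
      _ ≤ (1 + ε) * A := mul_le_mul_of_nonneg_right hexp hA0

/-- Comparison of infima of two sets under `(1 ± ε)`-bracketing of elements. -/
lemma bracketAux {S T : Set ℝ} {ε : ℝ} (hε0 : 0 ≤ ε)
    (hS : S.Nonempty) (hSnn : ∀ x ∈ S, 0 ≤ x) (hTnn : ∀ y ∈ T, 0 ≤ y)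
    (h1 : ∀ x ∈ S, ∃ y ∈ T, y ≤ (1 + ε) * x)
    (h2 : ∀ y ∈ T, ∃ x ∈ S, (1 - ε) * x ≤ y) :
    (1 - ε) * sInf S ≤ sInf T ∧ sInf T ≤ (1 + ε) * sInf S := by
  obtain ⟨x0, hx0⟩ := id hS
  obtain ⟨y0, hy0, -⟩ := h1 x0 hx0
  have hT : T.Nonempty := ⟨y0, hy0⟩
  have hbdS : BddBelow S := ⟨0, fun x hx => hSnn x hx⟩
  have hbdT : BddBelow T := ⟨0, fun y hy => hTnn y hy⟩
  have h1ε : (0:ℝ) < 1 + ε := by linarith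
  constructor
  · apply le_csInf hT
    intro y hy
    obtain ⟨x, hxS, hxy⟩ := h2 y hy
    rcases le_or_gt (1 - ε) 0 with h | h
    · exact le_trans (mul_nonpos_of_nonpos_of_nonneg h (Real.sInf_nonneg fun z hz => hSnn z hz))
        (hTnn y hy)
    · calc (1 - ε) * sInf S ≤ (1 - ε) * x :=
            mul_le_mul_of_nonneg_left (csInf_le hbdS hxS) h.le
        _ ≤ y := hxy
  · rw [← div_le_iff₀' h1ε]
    apply le_csInf hS
    intro x hx
    obtain ⟨y, hyT, hyx⟩ := h1 x hx
    rw [div_le_iff₀' h1ε]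
    exact le_trans (csInf_le hbdT hyT) hyx

theorem movementBased_coreset_is_size_coreset {X : Type*} [MetricSpace X]
    {n k m : ℕ} (hm : 1 ≤ m) (hk : 1 ≤ k) (hn : 1 ≤ n)
    {ε : ℝ} (hε : ε ∈ Set.Ioo (0 : ℝ) 1)
    (p q : Fin n → X)
    (hmove : ∑ t, dist (p t) (q t) ^ m ≤
      (ε / (2 * m)) ^ m * ⨅ c' : Fin k → X, clusterCost m p c') :
    ∀ c : Fin k → X, ∀ Ks : Set (Fin k → ℕ), Ks.Nonempty →
      (∀ K ∈ Ks, ∑ i, K i = n) →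
      |sizeConstraintCost m p c Ks - sizeConstraintCost m q c Ks| ≤
        ε * sizeConstraintCost m p c Ks := by
  obtain ⟨hε0, hε1⟩ := hε
  intro c Ks hKs hKsum
  haveI : Nonempty (Fin k) := ⟨⟨0, by omega⟩⟩
  have hopt0 : BddBelow (Set.range fun c' : Fin k → X => clusterCost m p c') := by
    refine ⟨0, ?_⟩
    rintro x ⟨c', rfl⟩
    exact Finset.sum_nonneg fun t _ =>
      pow_nonneg (Real.iInf_nonneg fun i => dist_nonneg) m
  -- per-assignment comparison
  have hkey : ∀ α : Fin n → Fin k,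
      (1 - ε) * (∑ t, dist (p t) (c (α t)) ^ m) ≤ ∑ t, dist (q t) (c (α t)) ^ m ∧
      (∑ t, dist (q t) (c (α t)) ^ m) ≤ (1 + ε) * ∑ t, dist (p t) (c (α t)) ^ m := by
    intro α
    have hoptle : (⨅ c' : Fin k → X, clusterCost m p c') ≤
        ∑ t, dist (p t) (c (α t)) ^ m := by
      refine le_trans (ciInf_le hopt0 c) (Finset.sum_le_sum fun t _ => ?_)
      exact pow_le_pow_left₀ (Real.iInf_nonneg fun i => dist_nonneg)
        (ciInf_le (Finite.bddBelow_range _) (α t)) m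
    have hB : ∑ t, dist (p t) (q t) ^ m ≤
        (ε / (2 * m)) ^ m * ∑ t, dist (p t) (c (α t)) ^ m :=
      hmove.trans (mul_le_mul_of_nonneg_left hoptle (by positivity))
    exact keyAux hm hε0 hε1.le (fun t => dist (p t) (c (α t))) (fun t => dist (p t) (q t))
      (fun t => dist (q t) (c (α t))) (fun t => dist_nonneg) (fun t => dist_nonneg)
      (fun t => dist_nonneg)
      (fun t => by
        calc dist (q t) (c (α t)) ≤ dist (q t) (p t) + dist (p t) (c (α t)) :=
              dist_triangle _ _ _
          _ = dist (p t) (c (α t)) + dist (p t) (q t) := by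
              rw [dist_comm (q t) (p t)]; ring)
      (fun t => by
        calc dist (p t) (c (α t)) ≤ dist (p t) (q t) + dist (q t) (c (α t)) :=
              dist_triangle _ _ _
          _ = dist (q t) (c (α t)) + dist (p t) (q t) := by ring)
      hB
  -- per-size-vector comparison
  have hsize : ∀ K ∈ Ks,
      (1 - ε) * sizeCost m p c K ≤ sizeCost m q c K ∧
      sizeCost m q c K ≤ (1 + ε) * sizeCost m p c K := by
    intro K hK
    obtain ⟨α0, hα0⟩ := exists_satisfiesSize K (hKsum K hK)
    apply bracketAux hε0.le
    · exact ⟨_, α0, hα0, rfl⟩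
    · rintro x ⟨α, hα, rfl⟩; positivity
    · rintro y ⟨α, hα, rfl⟩; positivity
    · rintro x ⟨α, hα, rfl⟩
      exact ⟨_, ⟨α, hα, rfl⟩, (hkey α).2⟩
    · rintro y ⟨α, hα, rfl⟩
      exact ⟨_, ⟨α, hα, rfl⟩, (hkey α).1⟩
  have hscnn : ∀ (r : Fin n → X) (K : Fin k → ℕ), 0 ≤ sizeCost m r c K := fun r K =>
    Real.sInf_nonneg (by rintro x ⟨α, hα, rfl⟩; positivity)
  -- outer comparison over size constraints
  have houter : (1 - ε) * sizeConstraintCost m p c Ks ≤ sizeConstraintCost m q c Ks ∧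
      sizeConstraintCost m q c Ks ≤ (1 + ε) * sizeConstraintCost m p c Ks := by
    apply bracketAux hε0.le
    · obtain ⟨K0, hK0⟩ := hKs
      exact ⟨_, K0, hK0, rfl⟩
    · rintro x ⟨K, hK, rfl⟩; exact hscnn p K
    · rintro y ⟨K, hK, rfl⟩; exact hscnn q K
    · rintro x ⟨K, hK, rfl⟩
      exact ⟨_, ⟨K, hK, rfl⟩, (hsize K hK).2⟩
    · rintro y ⟨K, hK, rfl⟩
      exact ⟨_, ⟨K, hK, rfl⟩, (hsize K hK).1⟩
  obtain ⟨hlo, hhi⟩ := houter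
  rw [abs_le]
  constructor <;> linarith
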